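/- For a star graph with center p and leaves 1,…,n, independent or negatively cylinder dependent Bernoulli availabilities (A_i) with Pr[A_i = 1] ≥ 1 − c(1 − y_i) where c = 2√2 − 2 and Σᵢ yᵢ ≤ 1, the expected maximum weight matching (selecting at most one active leaf i to match to p, gaining w_i) is at least c·Σᵢ wᵢ·yᵢ for any nonnegative weights wᵢ. -/

import Mathlib

open MeasureTheory ProbabilityTheory

section Aux
open Finset

private lemma sqrt2_ub : Real.sqrt 2 ≤ 1.41422 := by
  nlinarith [Real.sq_sqrt (by norm_num : (2:ℝ) ≥ 0), Real.sqrt_nonneg 2]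

private lemma sqrt2_lb : (1.414:ℝ) ≤ Real.sqrt 2 := by
  nlinarith [Real.sq_sqrt (by norm_num : (2:ℝ) ≥ 0), Real.sqrt_nonneg 2]

private lemma c_nonneg : (0:ℝ) ≤ 2 * Real.sqrt 2 - 2 := by nlinarith [sqrt2_lb]
private lemma c_le_one : 2 * Real.sqrt 2 - 2 ≤ 1 := by nlinarith [sqrt2_ub]

private lemma key_m (m : ℕ) (hm : 1 ≤ m) :
    (2 * Real.sqrt 2 - 2) ^ m * (1 - 1 / (m:ℝ)) ^ m ≤ 1 - (2 * Real.sqrt 2 - 2) := by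
  set c : ℝ := 2 * Real.sqrt 2 - 2 with hc
  have hc0 : 0 ≤ c := c_nonneg
  have hc1 : c ≤ 1 := c_le_one
  have h2 : Real.sqrt 2 ≤ 1.41422 := sqrt2_ub
  have h2' : (1.414:ℝ) ≤ Real.sqrt 2 := sqrt2_lb
  rcases Nat.lt_or_ge m 5 with h5 | h5
  · interval_cases m <;> norm_num <;> nlinarith [Real.sq_sqrt (by norm_num : (2:ℝ) ≥ 0)]
  · have hmpos : (0:ℝ) < m := by positivity
    have hb0 : (0:ℝ) ≤ 1 - 1/(m:ℝ) := by
      rw [sub_nonneg, div_le_one hmpos]; exact_mod_cast hm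
    have h1 : (1 - 1/(m:ℝ)) ^ m ≤ Real.exp (-1) := by
      have : (1 - 1/(m:ℝ)) ≤ Real.exp (-(1/(m:ℝ))) := by
        have := Real.add_one_le_exp (-(1/(m:ℝ))); linarith
      calc (1 - 1/(m:ℝ)) ^ m ≤ Real.exp (-(1/(m:ℝ))) ^ m :=
            pow_le_pow_left₀ hb0 this m
        _ = Real.exp ((m:ℝ) * -(1/(m:ℝ))) := by rw [← Real.exp_nat_mul]
        _ = Real.exp (-1) := by
            congr 1
            field_simp
    have h2m : c ^ m ≤ c ^ 5 := pow_le_pow_of_le_one hc0 hc1 h5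
    have hexp : Real.exp (-1) ≤ 1 / 2.7182818 := by
      rw [Real.exp_neg, one_div]
      apply inv_anti₀ (by norm_num)
      exact le_of_lt (lt_of_le_of_lt (by norm_num) Real.exp_one_gt_d9)
    have hcub : c ≤ 0.82844 := by rw [hc]; nlinarith [h2]
    have h5b : c ^ 5 ≤ 0.82844 ^ 5 := pow_le_pow_left₀ hc0 hcub 5
    have hbig : c ^ 5 * (1/2.7182818) ≤ 1 - c := by nlinarith [h5b, hcub]
    calc c ^ m * (1 - 1/(m:ℝ)) ^ m ≤ c ^ 5 * Real.exp (-1) := by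
          apply mul_le_mul h2m h1 (pow_nonneg hb0 m) (pow_nonneg hc0 5)
      _ ≤ c ^ 5 * (1/2.7182818) := by
          apply mul_le_mul_of_nonneg_left hexp (pow_nonneg hc0 5)
      _ ≤ 1 - c := hbig

private lemma lemB (m : ℕ) (hm : 1 ≤ m) (s : ℝ) (hs0 : 0 ≤ s) (hs1 : s ≤ 1) :
    (2 * Real.sqrt 2 - 2) ^ m * (1 - s / (m:ℝ)) ^ m ≤ 1 - (2 * Real.sqrt 2 - 2) * s := by
  set c : ℝ := 2 * Real.sqrt 2 - 2 with hc
  have hc0 : 0 ≤ c := c_nonneg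
  have hc1 : c ≤ 1 := c_le_one
  have hmpos : (0:ℝ) < m := by positivity
  have hb0 : (0:ℝ) ≤ 1 - 1/(m:ℝ) := by
    rw [sub_nonneg, div_le_one hmpos]; exact_mod_cast hm
  have hconv := (convexOn_pow m).2 (Set.mem_Ici.mpr (by norm_num : (0:ℝ) ≤ 1))
    (Set.mem_Ici.mpr hb0) (by linarith : (0:ℝ) ≤ 1 - s) hs0 (by ring)
  have heq : (1-s) • (1:ℝ) + s • (1 - 1/(m:ℝ)) = 1 - s / m := by
    simp only [smul_eq_mul]; field_simp; ring
  rw [heq] at hconv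
  simp only [smul_eq_mul, one_pow] at hconv
  have hkey : c ^ m * (1 - 1/(m:ℝ)) ^ m ≤ 1 - c := key_m m hm
  have hcm1 : c ^ m ≤ 1 := pow_le_one₀ hc0 hc1
  have hcm0 : 0 ≤ c ^ m := pow_nonneg hc0 m
  have h1 : c ^ m * (1 - s/(m:ℝ)) ^ m ≤ c ^ m * ((1-s) * 1 + s * (1 - 1/(m:ℝ)) ^ m) :=
    mul_le_mul_of_nonneg_left hconv hcm0
  nlinarith [mul_le_mul_of_nonneg_left hkey hs0]

private lemma amgm {ι : Type*} (K : Finset ι) (hK : K.Nonempty) (z : ι → ℝ)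
    (hz : ∀ i ∈ K, 0 ≤ z i) :
    ∏ i ∈ K, z i ≤ ((∑ i ∈ K, z i) / (K.card : ℝ)) ^ K.card := by
  have hm : (0:ℝ) < K.card := by exact_mod_cast Finset.card_pos.mpr hK
  have hgm := Real.geom_mean_le_arith_mean_weighted K (fun _ => (K.card : ℝ)⁻¹) z
    (fun i _ => by positivity)
    (by simp [Finset.sum_const]; field_simp)
    hz
  have hprod : ∏ i ∈ K, z i = (∏ i ∈ K, z i ^ ((K.card:ℝ)⁻¹)) ^ K.card := by
    rw [← Finset.prod_pow]
    apply Finset.prod_congr rfl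
    intro i hi
    rw [← Real.rpow_natCast (z i ^ ((K.card:ℝ)⁻¹)) K.card, ← Real.rpow_mul (hz i hi)]
    rw [inv_mul_cancel₀ (ne_of_gt hm), Real.rpow_one]
  rw [hprod]
  have h0 : 0 ≤ ∏ i ∈ K, z i ^ ((K.card:ℝ)⁻¹) :=
    Finset.prod_nonneg fun i hi => Real.rpow_nonneg (hz i hi) _
  calc (∏ i ∈ K, z i ^ ((K.card:ℝ)⁻¹)) ^ K.card
      ≤ (∑ i ∈ K, (K.card:ℝ)⁻¹ * z i) ^ K.card := pow_le_pow_left₀ h0 hgm _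
    _ = ((∑ i ∈ K, z i) / (K.card : ℝ)) ^ K.card := by
        rw [← Finset.mul_sum]; ring_nf

private lemma lemA {ι : Type*} (K : Finset ι) (y : ι → ℝ)
    (hy0 : ∀ i ∈ K, 0 ≤ y i) (hys : ∑ i ∈ K, y i ≤ 1) :
    ∏ i ∈ K, ((2 * Real.sqrt 2 - 2) * (1 - y i)) ≤
      1 - (2 * Real.sqrt 2 - 2) * ∑ i ∈ K, y i := by
  set c : ℝ := 2 * Real.sqrt 2 - 2 with hc
  rcases K.eq_empty_or_nonempty with rfl | hK
  · simp
  have hm : 1 ≤ K.card := Finset.card_pos.mpr hK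
  have hmpos : (0:ℝ) < K.card := by exact_mod_cast Finset.card_pos.mpr hK
  set s := ∑ i ∈ K, y i with hsdef
  have hs0 : 0 ≤ s := Finset.sum_nonneg hy0
  have hyle : ∀ i ∈ K, y i ≤ 1 := fun i hi =>
    le_trans (Finset.single_le_sum hy0 hi) hys
  have hsplit : ∏ i ∈ K, (c * (1 - y i)) = c ^ K.card * ∏ i ∈ K, (1 - y i) := by
    rw [Finset.prod_mul_distrib, Finset.prod_const]
  have hag : ∏ i ∈ K, (1 - y i) ≤ (1 - s / (K.card:ℝ)) ^ K.card := by
    have := amgm K hK (fun i => 1 - y i) (fun i hi => by linarith [hyle i hi])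
    convert this using 2
    rw [Finset.sum_sub_distrib, Finset.sum_const, nsmul_eq_mul, mul_one]
    field_simp
    rw [hsdef]
  calc ∏ i ∈ K, (c * (1 - y i)) = c ^ K.card * ∏ i ∈ K, (1 - y i) := hsplit
    _ ≤ c ^ K.card * (1 - s / (K.card:ℝ)) ^ K.card :=
        mul_le_mul_of_nonneg_left hag (pow_nonneg c_nonneg _)
    _ ≤ 1 - c * s := lemB K.card hm s hs0 hys

private lemma fold_filter_max {ι : Type*} [DecidableEq ι] (s : Finset ι) (p : ι → Prop)
    [DecidablePred p] (w : ι → ℝ) :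
    (s.filter p).fold max 0 w = s.fold max 0 (fun i => if p i then w i else 0) := by
  induction s using Finset.induction_on with
  | empty => simp
  | @insert a s ha ih =>
    rw [Finset.filter_insert]
    by_cases hp : p a
    · rw [if_pos hp, Finset.fold_insert (fun h => ha (Finset.mem_of_mem_filter a h)),
        Finset.fold_insert ha, ih, if_pos hp]
    · rw [if_neg hp, Finset.fold_insert ha, ih, if_neg hp]
      have h0 : (0:ℝ) ≤ s.fold max 0 (fun i => if p i then w i else 0) :=
        (Finset.le_fold_max _).mpr (Or.inl le_rfl)
      rw [max_eq_right h0]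

private lemma measurable_foldmax {Ω ι : Type*} [MeasurableSpace Ω] [DecidableEq ι]
    (s : Finset ι) (g : ι → Ω → ℝ) (hg : ∀ i, Measurable (g i)) :
    Measurable fun ω => s.fold max 0 (fun i => g i ω) := by
  induction s using Finset.induction_on with
  | empty => simp only [Finset.fold_empty]; exact measurable_const
  | @insert a s ha ih =>
    simp only [Finset.fold_insert ha]
    exact (hg a).max ih

private lemma integrable_of_bdd {Ω : Type*} [MeasureSpace Ω]
    [IsProbabilityMeasure (ℙ : Measure Ω)] {f : Ω → ℝ} (hf : Measurable f) (C : ℝ)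
    (h : ∀ ω, ‖f ω‖ ≤ C) : Integrable f :=
  ⟨hf.aestronglyMeasurable, HasFiniteIntegral.of_bounded (Filter.Eventually.of_forall h)⟩

end Aux

/-- Star CRS value bound: for a star with center `p` and leaves `1,…,n` with
nonnegative leaf weights `w`, NCD Bernoulli availabilities `A i` with
`Pr[A i = 1] ≥ 1 - c(1 - y i)` where `c = 2√2 - 2` and `∑ y ≤ 1`, the expected
maximum weight matching (matching `p` to at most one active leaf `i`, gaining
`w i`, i.e. the max of `w` over active leaves) is at least `c · ∑ w i · y i`. -/
theorem stmt_19 {Ω : Type*} [MeasureSpace Ω] [IsProbabilityMeasure (ℙ : Measure Ω)]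
    (n : ℕ) (A : Fin n → Ω → ℝ) (hAmeas : ∀ i, Measurable (A i))
    (hBer : ∀ i, ∀ ω, A i ω = 0 ∨ A i ω = 1)
    (hNCD1 : ∀ S : Finset (Fin n),
      ∫ ω, ∏ i ∈ S, A i ω ≤ ∏ i ∈ S, ∫ ω, A i ω)
    (hNCD2 : ∀ S : Finset (Fin n),
      ∫ ω, ∏ i ∈ S, (1 - A i ω) ≤ ∏ i ∈ S, ∫ ω, (1 - A i ω))
    (c : ℝ) (hc : c = 2 * Real.sqrt 2 - 2)
    (y : Fin n → ℝ) (hy0 : ∀ i, 0 ≤ y i) (hysum : ∑ i, y i ≤ 1)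
    (hmarg : ∀ i, (ℙ {ω | A i ω = 1}).toReal ≥ 1 - c * (1 - y i))
    (w : Fin n → ℝ) (hw : ∀ i, 0 ≤ w i) :
    ∫ ω, (Finset.univ.filter (fun i => A i ω = 1)).fold max 0 w ≥
      c * ∑ i, w i * y i := by
  classical
  have hc0 : 0 ≤ c := hc ▸ c_nonneg
  have hc1 : c ≤ 1 := hc ▸ c_le_one
  -- the matching value function
  set M : Ω → ℝ := fun ω => (Finset.univ.filter (fun i => A i ω = 1)).fold max 0 w with hM
  have hA01 : ∀ i ω, 0 ≤ A i ω ∧ A i ω ≤ 1 := by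
    intro i ω; rcases hBer i ω with h | h <;> rw [h] <;> norm_num
  have hMg : ∀ ω, M ω = Finset.univ.fold max 0 (fun i => if A i ω = 1 then w i else 0) :=
    fun ω => fold_filter_max _ _ w
  have hM0 : ∀ ω, 0 ≤ M ω := fun ω => (Finset.le_fold_max _).mpr (Or.inl le_rfl)
  have hMub : ∀ ω, M ω ≤ ∑ i, w i := by
    intro ω
    apply (Finset.fold_max_le _).mpr
    refine ⟨Finset.sum_nonneg fun i _ => hw i, fun i hi => ?_⟩
    exact Finset.single_le_sum (fun j _ => hw j) (Finset.mem_univ i)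
  have hMmeas : Measurable M := by
    have h := measurable_foldmax Finset.univ (fun i ω => if A i ω = 1 then w i else 0)
      (fun i => Measurable.ite (hAmeas i (measurableSet_singleton 1)) measurable_const
        measurable_const)
    convert h using 1
    exact funext hMg
  have hMint : Integrable M := by
    apply integrable_of_bdd hMmeas (∑ i, w i)
    intro ω
    rw [Real.norm_eq_abs, abs_of_nonneg (hM0 ω)]
    exact hMub ω
  have hMact : ∀ ω (j : Fin n), A j ω = 1 → w j ≤ M ω := by
    intro ω j hj
    exact (Finset.le_fold_max _).mpr
      (Or.inr ⟨j, Finset.mem_filter.mpr ⟨Finset.mem_univ j, hj⟩, le_rfl⟩)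
  -- integrability of A i
  have hAint : ∀ i, Integrable (A i) := by
    intro i
    apply integrable_of_bdd (hAmeas i) 1
    intro ω
    rw [Real.norm_eq_abs, abs_of_nonneg (hA01 i ω).1]
    exact (hA01 i ω).2
  -- integral of A i is the probability of activity
  have hintA : ∀ i, ∫ ω, A i ω = (ℙ {ω | A i ω = 1}).toReal := by
    intro i
    have hset : MeasurableSet {ω | A i ω = 1} := hAmeas i (measurableSet_singleton 1)
    have heq : (fun ω => A i ω) = Set.indicator {ω | A i ω = 1} (fun _ => (1:ℝ)) := by
      funext ω
      rcases hBer i ω with h | h <;>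
        simp [Set.indicator_apply, Set.mem_setOf_eq, h]
    rw [heq, MeasureTheory.integral_indicator_const (1:ℝ) hset, smul_eq_mul, mul_one]
    rfl
  -- the key probability bound for any subset
  have hPT : ∀ T : Finset (Fin n),
      ∫ ω, ∏ i ∈ T, (1 - A i ω) ≤ 1 - c * ∑ i ∈ T, y i := by
    intro T
    have h1 : ∀ i ∈ T, ∫ ω, (1 - A i ω) ≤ c * (1 - y i) := by
      intro i _
      rw [integral_sub (integrable_const 1) (hAint i), integral_const, probReal_univ,
        smul_eq_mul, mul_one, hintA i]
      have := hmarg i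
      linarith
    have h0 : ∀ i ∈ T, 0 ≤ ∫ ω, (1 - A i ω) := by
      intro i _
      apply integral_nonneg
      intro ω
      have := (hA01 i ω).2
      simp only [Pi.zero_apply]
      linarith
    have hysumT : ∑ i ∈ T, y i ≤ 1 :=
      le_trans (Finset.sum_le_sum_of_subset_of_nonneg (Finset.subset_univ T)
        (fun i _ _ => hy0 i)) hysum
    calc ∫ ω, ∏ i ∈ T, (1 - A i ω) ≤ ∏ i ∈ T, ∫ ω, (1 - A i ω) := hNCD2 T
      _ ≤ ∏ i ∈ T, (c * (1 - y i)) := Finset.prod_le_prod h0 h1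
      _ ≤ 1 - c * ∑ i ∈ T, y i := by
          rw [hc]
          exact lemA T y (fun i _ => hy0 i) hysumT
  -- sorting by decreasing weight
  set σ : Equiv.Perm (Fin n) := Tuple.sort (fun i => -w i) with hσ
  have hsort : ∀ a b : Fin n, a ≤ b → w (σ b) ≤ w (σ a) := by
    intro a b hab
    have h := Tuple.monotone_sort (fun i => -w i) hab
    simp only [Function.comp_apply] at h
    rw [← hσ] at h
    linarith
  set W : ℕ → ℝ := fun k => if h : k < n then w (σ ⟨k, h⟩) else 0 with hWdef
  have hW0 : ∀ k, 0 ≤ W k := by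
    intro k
    rw [hWdef]
    dsimp only
    split
    · exact hw _
    · exact le_rfl
  have hWanti : ∀ j k : ℕ, j ≤ k → W k ≤ W j := by
    intro j k hjk
    rw [hWdef]
    dsimp only
    by_cases hk : k < n
    · have hj : j < n := lt_of_le_of_lt hjk hk
      rw [dif_pos hk, dif_pos hj]
      exact hsort ⟨j, hj⟩ ⟨k, hk⟩ hjk
    · rw [dif_neg hk]
      split
      · exact hw _
      · exact le_rfl
  have hWn : W n = 0 := by rw [hWdef]; simp
  have hWrank : ∀ i : Fin n, W ((σ.symm i : ℕ)) = w i := by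
    intro i
    rw [hWdef]
    dsimp only
    rw [dif_pos (σ.symm i).isLt, Fin.eta, Equiv.apply_symm_apply]
  -- top-k sets and their all-inactive indicators
  set T : ℕ → Finset (Fin n) := fun k => Finset.univ.filter (fun i => (σ.symm i : ℕ) < k)
    with hT
  set P : ℕ → Ω → ℝ := fun k ω => ∏ i ∈ T k, (1 - A i ω) with hP
  have hPcase : ∀ (S : Finset (Fin n)) ω,
      (∃ j ∈ S, A j ω = 1 ∧ ∏ i ∈ S, (1 - A i ω) = 0) ∨ (∏ i ∈ S, (1 - A i ω) = 1) := by
    intro S ω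
    by_cases h : ∃ j ∈ S, A j ω = 1
    · obtain ⟨j, hj, hAj⟩ := h
      left
      exact ⟨j, hj, hAj, Finset.prod_eq_zero hj (by rw [hAj]; ring)⟩
    · right
      push_neg at h
      apply Finset.prod_eq_one
      intro i hi
      rcases hBer i ω with h0 | h1
      · rw [h0]; ring
      · exact absurd h1 (h i hi)
  have hPbd : ∀ (S : Finset (Fin n)) ω,
      0 ≤ ∏ i ∈ S, (1 - A i ω) ∧ ∏ i ∈ S, (1 - A i ω) ≤ 1 := by
    intro S ω
    constructor
    · exact Finset.prod_nonneg fun i _ => by linarith [(hA01 i ω).2]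
    · exact Finset.prod_le_one (fun i _ => by linarith [(hA01 i ω).2])
        (fun i _ => by linarith [(hA01 i ω).1])
  -- pointwise bound
  have hpw : ∀ ω, ∑ k ∈ Finset.range n, (W k - W (k+1)) * (1 - P (k+1) ω) ≤ M ω := by
    intro ω
    by_cases hall : ∀ k ∈ Finset.range n, P (k+1) ω = 1
    · have hz : ∑ k ∈ Finset.range n, (W k - W (k+1)) * (1 - P (k+1) ω) = 0 :=
        Finset.sum_eq_zero fun k hk => by rw [hall k hk]; ring
      rw [hz]; exact hM0 ω
    · push_neg at hall
      set S := (Finset.range n).filter (fun k => P (k+1) ω ≠ 1) with hSdef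
      have hSne : S.Nonempty := by
        obtain ⟨k, hk, hkp⟩ := hall
        exact ⟨k, Finset.mem_filter.mpr ⟨hk, hkp⟩⟩
      set r := S.min' hSne with hrdef
      have hrS : r ∈ S := S.min'_mem hSne
      have hrn : r < n := Finset.mem_range.mp (Finset.mem_filter.mp hrS).1
      have hrP : P (r+1) ω ≠ 1 := (Finset.mem_filter.mp hrS).2
      obtain ⟨j, hjT, hjA, _⟩ := (hPcase (T (r+1)) ω).resolve_right hrP
      have hjrank : (σ.symm j : ℕ) ≤ r := by
        have := (Finset.mem_filter.mp hjT).2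
        omega
      have hWrM : W r ≤ M ω :=
        calc W r ≤ W ((σ.symm j : ℕ)) := hWanti _ _ hjrank
          _ = w j := hWrank j
          _ ≤ M ω := hMact ω j hjA
      have hzero : ∀ k ∈ Finset.Ico 0 r, (W k - W (k+1)) * (1 - P (k+1) ω) = 0 := by
        intro k hk
        have hkr : k < r := (Finset.mem_Ico.mp hk).2
        have hkn : k ∈ Finset.range n := Finset.mem_range.mpr (lt_trans hkr hrn)
        have hk1 : P (k+1) ω = 1 := by
          by_contra hne
          exact absurd (S.min'_le k (Finset.mem_filter.mpr ⟨hkn, hne⟩)) (not_le.mpr hkr)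
        rw [hk1]; ring
      calc ∑ k ∈ Finset.range n, (W k - W (k+1)) * (1 - P (k+1) ω)
          = ∑ k ∈ Finset.Ico 0 r, (W k - W (k+1)) * (1 - P (k+1) ω)
            + ∑ k ∈ Finset.Ico r n, (W k - W (k+1)) * (1 - P (k+1) ω) := by
            rw [Finset.range_eq_Ico,
              Finset.sum_Ico_consecutive _ (Nat.zero_le r) (le_of_lt hrn)]
        _ = ∑ k ∈ Finset.Ico r n, (W k - W (k+1)) * (1 - P (k+1) ω) := by
            rw [Finset.sum_eq_zero hzero, zero_add]
        _ ≤ ∑ k ∈ Finset.Ico r n, (W k - W (k+1)) := by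
            apply Finset.sum_le_sum
            intro k _
            have hD : 0 ≤ W k - W (k+1) := sub_nonneg.mpr (hWanti k (k+1) (Nat.le_succ k))
            have h1P : 1 - P (k+1) ω ≤ 1 := by linarith [(hPbd (T (k+1)) ω).1]
            exact mul_le_of_le_one_right hD h1P
        _ = W r - W n := by
            rw [Finset.sum_Ico_eq_sub _ (le_of_lt hrn), Finset.sum_range_sub' W,
              Finset.sum_range_sub' W]
            ring
        _ ≤ M ω := by rw [hWn]; linarith
  -- integrating the pointwise bound
  have hPmeas : ∀ k, Measurable (P k) := by
    intro k
    apply Finset.measurable_prod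
    intro i _
    exact measurable_const.sub (hAmeas i)
  have hPint : ∀ k, Integrable (P k) := by
    intro k
    apply integrable_of_bdd (hPmeas k) 1
    intro ω
    rw [Real.norm_eq_abs, abs_of_nonneg (hPbd (T k) ω).1]
    exact (hPbd (T k) ω).2
  have hmain : ∑ k ∈ Finset.range n, (W k - W (k+1)) * (1 - ∫ ω, P (k+1) ω) ≤ ∫ ω, M ω := by
    have hintS : ∀ k : ℕ, Integrable (fun ω => (W k - W (k+1)) * (1 - P (k+1) ω)) := by
      intro k
      exact (((integrable_const 1).sub (hPint (k+1))).const_mul _)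
    have hle := integral_mono (integrable_finset_sum (Finset.range n) fun k _ => hintS k)
      hMint hpw
    rw [integral_finset_sum (Finset.range n) (fun k _ => hintS k)] at hle
    convert hle using 2 with k
    case e'_2 => rfl
    rw [integral_const_mul, integral_sub (integrable_const 1) (hPint (k+1)),
      integral_const, probReal_univ, smul_eq_mul, mul_one]
  -- lower bound each probability term
  have hfinal1 : c * ∑ k ∈ Finset.range n, (W k - W (k+1)) * ∑ i ∈ T (k+1), y i
      ≤ ∑ k ∈ Finset.range n, (W k - W (k+1)) * (1 - ∫ ω, P (k+1) ω) := by
    rw [Finset.mul_sum]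
    apply Finset.sum_le_sum
    intro k _
    have hD : 0 ≤ W k - W (k+1) := sub_nonneg.mpr (hWanti k (k+1) (Nat.le_succ k))
    have h := hPT (T (k+1))
    calc c * ((W k - W (k+1)) * ∑ i ∈ T (k+1), y i)
        = (W k - W (k+1)) * (c * ∑ i ∈ T (k+1), y i) := by ring
      _ ≤ (W k - W (k+1)) * (1 - ∫ ω, P (k+1) ω) := by
          apply mul_le_mul_of_nonneg_left _ hD
          linarith
  -- the sum identity
  have hiden : ∑ k ∈ Finset.range n, (W k - W (k+1)) * ∑ i ∈ T (k+1), y i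
      = ∑ i, w i * y i := by
    have hstep : ∀ k, (W k - W (k+1)) * ∑ i ∈ T (k+1), y i
        = ∑ i : Fin n, (if (σ.symm i : ℕ) < k + 1 then (W k - W (k+1)) * y i else 0) := by
      intro k
      rw [hT]
      dsimp only
      rw [Finset.sum_filter, Finset.mul_sum]
      apply Finset.sum_congr rfl
      intro i _
      split <;> ring
    calc ∑ k ∈ Finset.range n, (W k - W (k+1)) * ∑ i ∈ T (k+1), y i
        = ∑ k ∈ Finset.range n, ∑ i : Fin n,
            (if (σ.symm i : ℕ) < k + 1 then (W k - W (k+1)) * y i else 0) := by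
          apply Finset.sum_congr rfl
          intro k _
          exact hstep k
      _ = ∑ i : Fin n, ∑ k ∈ Finset.range n,
            (if (σ.symm i : ℕ) < k + 1 then (W k - W (k+1)) * y i else 0) :=
          Finset.sum_comm
      _ = ∑ i, w i * y i := by
          apply Finset.sum_congr rfl
          intro i _
          have hrn : (σ.symm i : ℕ) < n := (σ.symm i).isLt
          have hfilter : (Finset.range n).filter (fun k => (σ.symm i : ℕ) < k + 1)
              = Finset.Ico (σ.symm i : ℕ) n := by
            ext k
            simp only [Finset.mem_filter, Finset.mem_range, Finset.mem_Ico]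
            omega
          rw [← Finset.sum_filter, hfilter, ← Finset.sum_mul]
          rw [Finset.sum_Ico_eq_sub _ (le_of_lt hrn), Finset.sum_range_sub' W,
            Finset.sum_range_sub' W, hWn, hWrank i]
          ring
  rw [ge_iff_le, hM]
  calc c * ∑ i, w i * y i
      = c * ∑ k ∈ Finset.range n, (W k - W (k+1)) * ∑ i ∈ T (k+1), y i := by rw [hiden]
    _ ≤ ∑ k ∈ Finset.range n, (W k - W (k+1)) * (1 - ∫ ω, P (k+1) ω) := hfinal1
    _ ≤ ∫ ω, M ω := hmain
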